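/- Let ψ : ℝ≥0 → ℝ≥0 be a nondecreasing, upper semicontinuous function. Then the iterates ψⁿ(t) tend to 0 as n → ∞ for every t > 0 if and only if ψ(t) < t for every t > 0. -/

import Mathlib

open Filter

theorem iterates_tendsto_zero_iff_lt_id
    (ψ : NNReal → NNReal) (hmono : Monotone ψ) (husc : UpperSemicontinuous ψ) :
    (∀ t : NNReal, 0 < t → Tendsto (fun n => ψ^[n] t) atTop (nhds 0)) ↔
      (∀ t : NNReal, 0 < t → ψ t < t) := by
  constructor
  · intro h t ht
    by_contra hle
    push_neg at hle
    have key : ∀ n, t ≤ ψ^[n] t := by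
      intro n
      induction n with
      | zero => simp
      | succ n ih =>
        rw [Function.iterate_succ_apply']
        exact le_trans hle (hmono ih)
    have hev : ∀ᶠ n in atTop, ψ^[n] t < t :=
      (h t ht).eventually (eventually_lt_nhds ht)
    obtain ⟨n, hn⟩ := hev.exists
    exact absurd (key n) (not_le.mpr hn)
  · intro h t ht
    -- ψ 0 = 0
    have hψ0 : ψ 0 = 0 := by
      by_contra h0
      have hp : 0 < ψ 0 := pos_iff_ne_zero.mpr h0
      exact absurd (hmono (zero_le : 0 ≤ ψ 0)) (not_le.mpr (h (ψ 0) hp))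
    have hle : ∀ x : NNReal, ψ x ≤ x := by
      intro x
      rcases eq_or_lt_of_le (zero_le : 0 ≤ x) with hx | hx
      · rw [← hx, hψ0]
      · exact (h x hx).le
    set a : ℕ → NNReal := fun n => ψ^[n] t with ha
    have hanti : Antitone a := by
      apply antitone_nat_of_succ_le
      intro n
      have : a (n + 1) = ψ (a n) := Function.iterate_succ_apply' ψ n t
      rw [this]
      exact hle (a n)
    set L : NNReal := ⨅ n, a n with hL
    have htend : Tendsto a atTop (nhds L) :=
      tendsto_atTop_ciInf hanti (OrderBot.bddBelow _)
    have hL0 : L = 0 := by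
      by_contra hL0
      have hLpos : 0 < L := pos_iff_ne_zero.mpr hL0
      have hψL : ψ L < L := h L hLpos
      obtain ⟨y, hy1, hy2⟩ := exists_between hψL
      have hev : ∀ᶠ x in nhds L, ψ x < y := husc L y hy1
      have hev2 : ∀ᶠ n in atTop, ψ (a n) < y := htend.eventually hev
      obtain ⟨n, hn⟩ := hev2.exists
      have : L ≤ a (n + 1) := ciInf_le (OrderBot.bddBelow _) (n + 1)
      have heq : a (n + 1) = ψ (a n) := Function.iterate_succ_apply' ψ n t
      rw [heq] at this
      exact absurd (this.trans_lt hn) (not_lt.mpr hy2.le)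
    rw [hL0] at htend
    exact htend
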